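/- Let (X, 𝔄) be a measurable space, μ a probability measure on X, d ≥ 1, f : X → ℝ^d a bounded measurable map, and t ∈ ℝ. For x ∈ X let N(x;t) := {x' ∈ X : ⟨f(x), f(x')⟩ ≥ t}, and assume μ(N(x;t)) > 0 for μ-almost every x. Then ∫_X ( μ(N(x;t)) )⁻¹ ( ∫_{N(x;t)} ⟨f(x), f(x')⟩ dμ(x') ) dμ(x) ≥ ∫_X ∫_X ⟨f(x), f(x')⟩ dμ(x') dμ(x). Consequently the limit additional risk of InfoNCE with nearest-neighbor restricted positives, − ∫ E_{x' ∈ N(x;t)} ⟨f(x), f(x')⟩ dμ(x) + ∫ log ∫ e^{⟨f(x), f(x')⟩} dμ dμ, is at most the limit additional risk of plain InfoNCE, − ∫∫ ⟨f(x), f(x')⟩ dμ² + ∫ log ∫ e^{⟨f(x), f(x')⟩} dμ dμ. -/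

import Mathlib

open MeasureTheory

/-- Nearest-neighbor positive selection: the anchor-averaged similarity with positives
restricted to the neighborhood N(x;t) = {x' : ⟨f(x),f(x')⟩ ≥ t} is at least the
unrestricted average similarity; consequently the limit additional risk of InfoNCE-NN
is at most that of plain InfoNCE. -/
theorem infoNCE_NN_additional_risk_le
    {X : Type*} [MeasurableSpace X] (μ : Measure X) [IsProbabilityMeasure μ]
    (d : ℕ) (hd : 1 ≤ d)
    (f : X → EuclideanSpace ℝ (Fin d)) (hf : Measurable f)
    (B : ℝ) (hB : ∀ x, ‖f x‖ ≤ B)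
    (t : ℝ)
    (hN : ∀ᵐ x ∂μ, 0 < μ {x' | t ≤ (inner ℝ (f x) (f x') : ℝ)}) :
    (∫ x, ∫ x', (inner ℝ (f x) (f x') : ℝ) ∂μ ∂μ)
      ≤ ∫ x, (μ {x' | t ≤ (inner ℝ (f x) (f x') : ℝ)}).toReal⁻¹ *
          ∫ x' in {x' | t ≤ (inner ℝ (f x) (f x') : ℝ)}, (inner ℝ (f x) (f x') : ℝ) ∂μ ∂μ ∧
    -(∫ x, (μ {x' | t ≤ (inner ℝ (f x) (f x') : ℝ)}).toReal⁻¹ *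
          ∫ x' in {x' | t ≤ (inner ℝ (f x) (f x') : ℝ)}, (inner ℝ (f x) (f x') : ℝ) ∂μ ∂μ)
        + ∫ x, Real.log (∫ x', Real.exp ((inner ℝ (f x) (f x') : ℝ)) ∂μ) ∂μ
      ≤ -(∫ x, ∫ x', (inner ℝ (f x) (f x') : ℝ) ∂μ ∂μ)
        + ∫ x, Real.log (∫ x', Real.exp ((inner ℝ (f x) (f x') : ℝ)) ∂μ) ∂μ := by
  classical
  have hXne : Nonempty X := by
    by_contra h
    rw [not_nonempty_iff] at h
    have h1 : μ Set.univ = 1 := measure_univ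
    rw [Set.univ_eq_empty_iff.mpr h, measure_empty] at h1
    exact zero_ne_one h1
  have hB0 : 0 ≤ B := le_trans (norm_nonneg _) (hB hXne.some)
  have hbound : ∀ x x', ‖(inner ℝ (f x) (f x') : ℝ)‖ ≤ B * B := by
    intro x x'
    calc ‖(inner ℝ (f x) (f x') : ℝ)‖ ≤ ‖f x‖ * ‖f x'‖ := norm_inner_le_norm _ _
    _ ≤ B * B := mul_le_mul (hB x) (hB x') (norm_nonneg _) hB0
  have hgm : Measurable fun q : X × X => (inner ℝ (f q.1) (f q.2) : ℝ) :=
    (hf.comp measurable_fst).inner (hf.comp measurable_snd)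
  have hgx : ∀ x, Measurable fun x' => (inner ℝ (f x) (f x') : ℝ) :=
    fun x => hgm.comp measurable_prodMk_left
  have hSm : ∀ x, MeasurableSet {x' | t ≤ (inner ℝ (f x) (f x') : ℝ)} :=
    fun x => measurableSet_le measurable_const (hgx x)
  have hint : ∀ x, Integrable (fun x' => (inner ℝ (f x) (f x') : ℝ)) μ :=
    fun x => Integrable.mono' (integrable_const (B*B)) (hgx x).aestronglyMeasurable
      (ae_of_all _ fun x' => hbound x x')
  -- measurability of the measure of the neighborhood
  have hTm : MeasurableSet {q : X × X | t ≤ (inner ℝ (f q.1) (f q.2) : ℝ)} :=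
    measurableSet_le measurable_const hgm
  have hpm : Measurable fun x => μ {x' | t ≤ (inner ℝ (f x) (f x') : ℝ)} := by
    exact measurable_measure_prodMk_left hTm
  -- measurability of the set integral
  have hGm : Measurable fun q : X × X =>
      (if t ≤ (inner ℝ (f q.1) (f q.2) : ℝ) then (inner ℝ (f q.1) (f q.2) : ℝ) else 0) :=
    Measurable.ite hTm hgm measurable_const
  have hFm : StronglyMeasurable fun x =>
      ∫ x', (if t ≤ (inner ℝ (f x) (f x') : ℝ) then (inner ℝ (f x) (f x') : ℝ) else 0) ∂μ :=
    hGm.stronglyMeasurable.integral_prod_right'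
  have hFeq : ∀ x, (∫ x', (if t ≤ (inner ℝ (f x) (f x') : ℝ) then (inner ℝ (f x) (f x') : ℝ) else 0) ∂μ)
      = ∫ x' in {x' | t ≤ (inner ℝ (f x) (f x') : ℝ)}, (inner ℝ (f x) (f x') : ℝ) ∂μ := by
    intro x
    rw [← integral_indicator (hSm x)]
    simp [Set.indicator_apply, Set.mem_setOf_eq]
  have hRm : Measurable fun x => (μ {x' | t ≤ (inner ℝ (f x) (f x') : ℝ)}).toReal⁻¹ *
      ∫ x' in {x' | t ≤ (inner ℝ (f x) (f x') : ℝ)}, (inner ℝ (f x) (f x') : ℝ) ∂μ := by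
    have h1 : Measurable fun x => (μ {x' | t ≤ (inner ℝ (f x) (f x') : ℝ)}).toReal⁻¹ :=
      (hpm.ennreal_toReal).inv
    have h2 : Measurable fun x =>
        ∫ x' in {x' | t ≤ (inner ℝ (f x) (f x') : ℝ)}, (inner ℝ (f x) (f x') : ℝ) ∂μ := by
      have heq : (fun x => ∫ x' in {x' | t ≤ (inner ℝ (f x) (f x') : ℝ)}, (inner ℝ (f x) (f x') : ℝ) ∂μ)
          = fun x => ∫ x', (if t ≤ (inner ℝ (f x) (f x') : ℝ) then (inner ℝ (f x) (f x') : ℝ) else 0) ∂μ :=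
        funext fun x => (hFeq x).symm
      rw [heq]
      exact hFm.measurable
    exact h1.mul h2
  -- bound on RHS integrand
  have hRbd : ∀ᵐ x ∂μ, ‖(μ {x' | t ≤ (inner ℝ (f x) (f x') : ℝ)}).toReal⁻¹ *
      ∫ x' in {x' | t ≤ (inner ℝ (f x) (f x') : ℝ)}, (inner ℝ (f x) (f x') : ℝ) ∂μ‖ ≤ B*B := by
    filter_upwards [hN] with x hx
    set s := {x' | t ≤ (inner ℝ (f x) (f x') : ℝ)} with hs
    have hp0 : 0 < (μ s).toReal := ENNReal.toReal_pos hx.ne' (measure_ne_top μ s)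
    have hIle : ‖∫ x' in s, (inner ℝ (f x) (f x') : ℝ) ∂μ‖ ≤ (B*B) * (μ s).toReal :=
      norm_setIntegral_le_of_norm_le_const (measure_lt_top μ s) (fun x' _ => hbound x x')
    rw [norm_mul, norm_inv, Real.norm_eq_abs (((μ s).toReal)), abs_of_nonneg ENNReal.toReal_nonneg]
    calc ((μ s).toReal)⁻¹ * ‖∫ x' in s, (inner ℝ (f x) (f x') : ℝ) ∂μ‖
        ≤ ((μ s).toReal)⁻¹ * ((B*B) * (μ s).toReal) := by
          exact mul_le_mul_of_nonneg_left hIle (inv_nonneg.2 hp0.le)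
      _ = B*B := by field_simp
  have hRint : Integrable (fun x => (μ {x' | t ≤ (inner ℝ (f x) (f x') : ℝ)}).toReal⁻¹ *
      ∫ x' in {x' | t ≤ (inner ℝ (f x) (f x') : ℝ)}, (inner ℝ (f x) (f x') : ℝ) ∂μ) μ :=
    Integrable.mono' (integrable_const (B*B)) hRm.aestronglyMeasurable hRbd
  have hLm : StronglyMeasurable fun x => ∫ x', (inner ℝ (f x) (f x') : ℝ) ∂μ :=
    hgm.stronglyMeasurable.integral_prod_right'
  have hLint : Integrable (fun x => ∫ x', (inner ℝ (f x) (f x') : ℝ) ∂μ) μ := by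
    refine Integrable.mono' (integrable_const (B*B)) hLm.aestronglyMeasurable
      (ae_of_all _ fun x => ?_)
    calc ‖∫ x', (inner ℝ (f x) (f x') : ℝ) ∂μ‖ ≤ (B*B) * (μ Set.univ).toReal :=
          norm_integral_le_of_norm_le_const (ae_of_all _ fun x' => hbound x x')
      _ = B*B := by simp
  -- pointwise inequality
  have hpt : ∀ᵐ x ∂μ, (∫ x', (inner ℝ (f x) (f x') : ℝ) ∂μ)
      ≤ (μ {x' | t ≤ (inner ℝ (f x) (f x') : ℝ)}).toReal⁻¹ *
        ∫ x' in {x' | t ≤ (inner ℝ (f x) (f x') : ℝ)}, (inner ℝ (f x) (f x') : ℝ) ∂μ := by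
    filter_upwards [hN] with x hx
    set s := {x' | t ≤ (inner ℝ (f x) (f x') : ℝ)} with hs
    have hsm : MeasurableSet s := hSm x
    have hp0 : 0 < (μ s).toReal := ENNReal.toReal_pos hx.ne' (measure_ne_top μ s)
    have hp1 : (μ s).toReal ≤ 1 := by
      calc (μ s).toReal ≤ (1:ENNReal).toReal :=
            ENNReal.toReal_mono ENNReal.one_ne_top prob_le_one
        _ = 1 := by simp
    have hintg : Integrable (fun x' => (inner ℝ (f x) (f x') : ℝ)) μ := hint x
    have hsplit : (∫ x' in s, (inner ℝ (f x) (f x') : ℝ) ∂μ)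
        + (∫ x' in sᶜ, (inner ℝ (f x) (f x') : ℝ) ∂μ)
        = ∫ x', (inner ℝ (f x) (f x') : ℝ) ∂μ := integral_add_compl hsm hintg
    have hIs : t * (μ s).toReal ≤ ∫ x' in s, (inner ℝ (f x) (f x') : ℝ) ∂μ := by
      have h := setIntegral_mono_on (integrable_const t).integrableOn hintg.integrableOn hsm
        (fun x' hx' => hx')
      simpa [setIntegral_const, measureReal_def, mul_comm] using h
    have hcompl : (μ sᶜ).toReal = 1 - (μ s).toReal := by
      have h := measure_compl hsm (measure_ne_top μ s)
      rw [measure_univ] at h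
      rw [h, ENNReal.toReal_sub_of_le prob_le_one ENNReal.one_ne_top, ENNReal.toReal_one]
    have hIsc : (∫ x' in sᶜ, (inner ℝ (f x) (f x') : ℝ) ∂μ) ≤ t * (1 - (μ s).toReal) := by
      have hle : ∀ x' ∈ sᶜ, (inner ℝ (f x) (f x') : ℝ) ≤ t := by
        intro x' hx'
        simp only [hs, Set.mem_compl_iff, Set.mem_setOf_eq, not_le] at hx'
        exact hx'.le
      have h := setIntegral_mono_on hintg.integrableOn (integrable_const t).integrableOn
        hsm.compl hle
      simpa [setIntegral_const, measureReal_def, hcompl, mul_comm] using h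
    rw [← hsplit, inv_mul_eq_div, le_div_iff₀ hp0]
    nlinarith [mul_nonneg (sub_nonneg.2 hp1) (sub_nonneg.2 hIs),
      mul_le_mul_of_nonneg_left hIsc hp0.le]
  have key := integral_mono_ae hLint hRint hpt
  exact ⟨key, by linarith⟩
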